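/- Let H_∞ be the group presented by generators a_i (i ∈ ℤ) and relations a_{i+1}⁻¹ a_i a_{i+1} = a_i² for all i ∈ ℤ, and let φ be the automorphism of H_∞ determined by φ(a_i) = a_{i+1} for all i. Then for every nonzero k ∈ ℤ, the automorphism φ^k is not inner: there is no ω ∈ H_∞ such that φ^k(h) = ω⁻¹hω for all h ∈ H_∞. -/

import Mathlib

/-- Relators of `H_∞ = ⟨aᵢ (i ∈ ℤ) | a_{i+1}⁻¹ aᵢ a_{i+1} = aᵢ²⟩`. -/
def HinfRels : Set (FreeGroup ℤ) :=
  Set.range fun i : ℤ =>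
    (FreeGroup.of (i + 1))⁻¹ * FreeGroup.of i * FreeGroup.of (i + 1) *
      (FreeGroup.of i * FreeGroup.of i)⁻¹

/-- The group `H_∞`. -/
abbrev Hinf : Type := PresentedGroup HinfRels


noncomputable section

/-- Dyadic "fractional parts": rationals in `[0,1)`. -/
abbrev Dy : Type := {q : ℚ // 0 ≤ q ∧ q < 1}

/-- 2-adic units in `ℚ`. -/
abbrev Un : Type := {q : ℚ // q ≠ 0 ∧ padicValRat 2 q = 0}

instance : Infinite Dy := by
  refine Infinite.of_injective (fun n : ℕ => (⟨((n:ℚ)+2)⁻¹, ?_, ?_⟩ : Dy)) ?_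
  · positivity
  · rw [inv_lt_one_iff₀]; right; push_cast; linarith
  · intro a b hab
    have : ((a:ℚ)+2)⁻¹ = ((b:ℚ)+2)⁻¹ := congrArg Subtype.val hab
    have ha : ((a:ℚ)+2) ≠ 0 := by positivity
    have hb : ((b:ℚ)+2) ≠ 0 := by positivity
    have h2 : ((a:ℚ)+2) = ((b:ℚ)+2) := by
      rw [← inv_inv ((a:ℚ)+2), this, inv_inv]
    have : (a:ℚ) = b := by linarith
    exact_mod_cast this

lemma padic_odd (n : ℕ) : padicValRat 2 ((2*n+1 : ℕ) : ℚ) = 0 := by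
  have h : ((2*n+1 : ℕ) : ℚ) = (((2*n+1 : ℕ) : ℤ) : ℚ) := by push_cast; ring
  rw [h, padicValRat.of_int, padicValInt.eq_zero_of_not_dvd (by omega)]
  simp

instance : Infinite Un := by
  refine Infinite.of_injective (fun n : ℕ => (⟨((2*n+1 : ℕ) : ℚ), ?_, padic_odd n⟩ : Un)) ?_
  · positivity
  · intro a b hab
    have : ((2*a+1 : ℕ) : ℚ) = ((2*b+1 : ℕ) : ℚ) := congrArg Subtype.val hab
    have h2 : (2*a+1 : ℕ) = (2*b+1 : ℕ) := by exact_mod_cast this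
    omega

/-- An equivalence between the two countably infinite sets. -/
noncomputable def muEquiv : Dy ≃ Un := Classical.choice <| by
  obtain ⟨d1⟩ := nonempty_denumerable Dy
  obtain ⟨d2⟩ := nonempty_denumerable Un
  exact ⟨(@Denumerable.eqv Dy d1).trans (@Denumerable.eqv Un d2).symm⟩

/-- translation by 1 on ℚ -/
def addOne : Equiv.Perm ℚ :=
  ⟨fun x => x + 1, fun x => x - 1, fun x => by ring, fun x => by ring⟩

/-- halving on ℚ -/
def halfP : Equiv.Perm ℚ :=
  ⟨fun x => x / 2, fun x => 2 * x, fun x => by ring, fun x => by ring⟩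

lemma key_identity : halfP⁻¹ * addOne * halfP = addOne * addOne := by
  ext x
  simp [halfP, addOne, Equiv.Perm.mul_apply, Equiv.Perm.inv_def]
  ring

/-- floor/fract decomposition of ℚ -/
def fracEquiv : ℚ ≃ ℤ × Dy where
  toFun q := (⌊q⌋, ⟨Int.fract q, Int.fract_nonneg q, Int.fract_lt_one q⟩)
  invFun z := (z.1 : ℚ) + z.2.val
  left_inv q := by simp [Int.floor_add_fract]
  right_inv z := by
    obtain ⟨n, d, hd0, hd1⟩ := z
    have h1 : ⌊(n:ℚ) + d⌋ = n := by
      rw [add_comm, Int.floor_add_intCast, Int.floor_eq_zero_iff.2 ⟨hd0, hd1⟩, zero_add]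
    have h2 : Int.fract ((n:ℚ) + d) = d := by
      rw [add_comm, Int.fract_add_intCast, Int.fract_eq_self.2 ⟨hd0, hd1⟩]
    exact Prod.ext h1 (Subtype.ext h2)

def Nice (f : Equiv.Perm ℚ) : Prop :=
  ∃ e : ℤ × Dy → ℚ, Function.Injective e ∧ (∀ z : ℤ × Dy, f (e z) = e (z.1 + 1, z.2)) ∧
    ∀ x : ℚ, x ∉ Set.range e → f x = x

lemma nice_addOne : Nice addOne := by
  refine ⟨fun z => (z.1 : ℚ) + z.2.val, ?_, ?_, ?_⟩
  · intro z w h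
    have := fracEquiv.symm.injective (a₁ := z) (a₂ := w)
    exact this h
  · intro z; show ((z.1 : ℚ) + z.2.val) + 1 = ((z.1 + 1 : ℤ) : ℚ) + z.2.val
    push_cast; ring
  · intro x hx
    exact absurd ⟨fracEquiv x, by
      show ((⌊x⌋ : ℚ) + Int.fract x) = x
      exact Int.floor_add_fract x⟩ hx

lemma q2ne : (2:ℚ) ≠ 0 := by norm_num

lemma padic_two_zpow (z : ℤ) : padicValRat 2 ((2:ℚ)^z) = z := by
  have h2 : padicValRat 2 (2:ℚ) = 1 := by
    have := padicValRat.self (p := 2) (by norm_num)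
    simpa using this
  rcases z.eq_nat_or_neg with ⟨n, rfl | rfl⟩
  · rw [zpow_natCast, padicValRat.pow (2:ℚ), h2]; ring
  · rw [zpow_neg, padicValRat.inv, zpow_natCast, padicValRat.pow (2:ℚ), h2]; ring

lemma gamma_inj {n m : ℤ} {u v : Un} (h : (2:ℚ)^(-n) * u.val = (2:ℚ)^(-m) * v.val) :
    n = m ∧ u = v := by
  have hzn : (2:ℚ)^(-n) ≠ 0 := zpow_ne_zero _ q2ne
  have hzm : (2:ℚ)^(-m) ≠ 0 := zpow_ne_zero _ q2ne
  have hval : padicValRat 2 ((2:ℚ)^(-n) * u.val) = padicValRat 2 ((2:ℚ)^(-m) * v.val) := by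
    rw [h]
  rw [padicValRat.mul hzn u.2.1, padicValRat.mul hzm v.2.1, u.2.2, v.2.2,
    padic_two_zpow, padic_two_zpow] at hval
  have hnm : n = m := by omega
  subst hnm
  exact ⟨rfl, Subtype.ext (mul_left_cancel₀ hzn h)⟩

lemma exists_decomp (q : ℚ) (hq : q ≠ 0) : ∃ (n : ℤ) (u : Un), q = (2:ℚ)^(-n) * u.val := by
  set v := padicValRat 2 q with hv
  have hz : (2:ℚ)^v ≠ 0 := zpow_ne_zero _ q2ne
  refine ⟨-v, ⟨q / (2:ℚ)^v, div_ne_zero hq hz, ?_⟩, ?_⟩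
  · rw [padicValRat.div hq hz, padic_two_zpow]; ring
  · show q = (2:ℚ)^(-(-v)) * (q / (2:ℚ)^v)
    rw [neg_neg]
    field_simp

lemma nice_step {f : Equiv.Perm ℚ} (hf : Nice f) :
    ∃ s : Equiv.Perm ℚ, s⁻¹ * f * s = f * f ∧ Nice s := by
  classical
  obtain ⟨e, einj, hshift, hout⟩ := hf
  set ι : ℚ → ℚ := fun q => e (fracEquiv q) with hι
  have ιinj : Function.Injective ι := einj.comp fracEquiv.injective
  have ιrange : Set.range ι = Set.range e := by
    ext x; constructor
    · rintro ⟨q, rfl⟩; exact ⟨fracEquiv q, rfl⟩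
    · rintro ⟨z, rfl⟩; exact ⟨fracEquiv.symm z, by simp [hι]⟩
  have hfι : ∀ q : ℚ, f (ι q) = ι (q + 1) := by
    intro q
    have h1 : fracEquiv (q + 1) = ((fracEquiv q).1 + 1, (fracEquiv q).2) := by
      refine Prod.ext ?_ (Subtype.ext ?_)
      · show ⌊q + 1⌋ = ⌊q⌋ + 1
        simpa using Int.floor_add_int q 1
      · show Int.fract (q + 1) = Int.fract q
        simpa using Int.fract_add_int q 1
    rw [hι]
    simp only []
    rw [h1]
    exact hshift (fracEquiv q)
  set ιe : ℚ ≃ Set.range ι := Equiv.ofInjective ι ιinj with hιe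
  have coe_ιe : ∀ q : ℚ, ((ιe q : ℚ)) = ι q := fun q => rfl
  set s : Equiv.Perm ℚ := Equiv.Perm.extendDomainHom ιe halfP with hs
  have hfext : f = Equiv.Perm.extendDomainHom ιe addOne := by
    ext x
    by_cases hx : x ∈ Set.range ι
    · obtain ⟨q, rfl⟩ := hx
      have : (Equiv.Perm.extendDomainHom ιe addOne) ((ιe q : ℚ)) = ((ιe (addOne q) : ℚ)) :=
        addOne.extendDomain_apply_image ιe q
      rw [coe_ιe, coe_ιe] at this
      rw [this]
      exact (hfι q).trans rfl
    · have h1 : (Equiv.Perm.extendDomainHom ιe addOne) x = x :=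
        addOne.extendDomain_apply_not_subtype ιe hx
      rw [h1]
      exact hout x (by rwa [← ιrange])
  have hsapp : ∀ q : ℚ, s (ι q) = ι (q / 2) := by
    intro q
    have : s ((ιe q : ℚ)) = ((ιe (halfP q) : ℚ)) := halfP.extendDomain_apply_image ιe q
    rw [coe_ιe, coe_ιe] at this
    exact this
  refine ⟨s, ?_, ?_⟩
  · rw [hfext, hs, ← map_inv, ← map_mul, ← map_mul, key_identity, map_mul]
  · -- Nice s
    refine ⟨fun z => ι ((2:ℚ)^(-z.1) * (muEquiv z.2).val), ?_, ?_, ?_⟩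
    · intro z w h
      have h2 := ιinj h
      obtain ⟨h3, h4⟩ := gamma_inj h2
      have h5 : z.2 = w.2 := muEquiv.injective h4
      exact Prod.ext h3 h5
    · intro z
      rw [hsapp]
      congr 1
      rw [show -(z.1 + 1) = -z.1 + (-1) by ring, zpow_add₀ q2ne]
      field_simp
    · intro x hx
      by_cases hxr : x ∈ Set.range ι
      · obtain ⟨q, rfl⟩ := hxr
        by_cases hq : q = 0
        · subst hq
          rw [hsapp]
          norm_num
        · obtain ⟨n, u, rfl⟩ := exists_decomp q hq
          exact absurd ⟨(n, muEquiv.symm u), by simp⟩ hx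
      · exact halfP.extendDomain_apply_not_subtype ιe hxr


lemma nice_ne_one {f : Equiv.Perm ℚ} (hf : Nice f) : f ≠ 1 := by
  obtain ⟨e, einj, hshift, -⟩ := hf
  intro h1
  have := hshift (0, ⟨0, le_refl 0, by norm_num⟩)
  rw [h1] at this
  simp only [Equiv.Perm.one_apply] at this
  have := einj this
  simpa using congrArg Prod.fst this

/-- the chain of permutations, each conjugating the previous to its square -/
noncomputable def chain : ℕ → {f : Equiv.Perm ℚ // Nice f}
  | 0 => ⟨addOne, nice_addOne⟩
  | n+1 => ⟨(nice_step (chain n).2).choose,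
      ((nice_step (chain n).2).choose_spec.2)⟩

lemma chain_rel (n : ℕ) :
    (chain (n+1)).1⁻¹ * (chain n).1 * (chain (n+1)).1 = (chain n).1 * (chain n).1 := by
  have := (nice_step (chain n).2).choose_spec.1
  exact this

lemma chain_ne_one (n : ℕ) : (chain n).1 ≠ 1 := nice_ne_one (chain n).2

/-- the ℤ-indexed family, trivial up to threshold `m` -/
noncomputable def gfam (m : ℤ) : ℤ → Equiv.Perm ℚ :=
  fun i => if i ≤ m then 1 else (chain (i - m - 1).toNat).1

lemma gfam_rel (m i : ℤ) :
    (gfam m (i+1))⁻¹ * gfam m i * gfam m (i+1) = gfam m i * gfam m i := by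
  unfold gfam
  by_cases h1 : i ≤ m
  · rw [if_pos h1]
    group
  · have h2 : ¬ (i + 1 ≤ m) := by omega
    rw [if_neg h1, if_neg h2]
    have h3 : (i + 1 - m - 1).toNat = (i - m - 1).toNat + 1 := by omega
    rw [h3]
    exact chain_rel _

lemma gfam_le {m i : ℤ} (h : i ≤ m) : gfam m i = 1 := if_pos h

lemma gfam_gt {m i : ℤ} (h : m < i) : gfam m i ≠ 1 := by
  unfold gfam
  rw [if_neg (by omega)]
  exact chain_ne_one _


lemma gfam_lift (m : ℤ) : ∀ r ∈ HinfRels, FreeGroup.lift (gfam m) r = 1 := by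
  rintro r ⟨i, rfl⟩
  simp only [map_mul, map_inv, FreeGroup.lift_apply_of]
  rw [mul_inv_eq_one]
  exact gfam_rel m i

/-- the homomorphism from `Hinf` to permutations of ℚ -/
noncomputable def rho (m : ℤ) : Hinf →* Equiv.Perm ℚ :=
  PresentedGroup.toGroup (gfam_lift m)

lemma rho_of (m i : ℤ) : rho m (PresentedGroup.of (rels := HinfRels) i) = gfam m i :=
  PresentedGroup.toGroup.of (gfam_lift m)

lemma phi_zpow (φ : MulAut Hinf)
    (hφ : ∀ i : ℤ, φ (PresentedGroup.of (rels := HinfRels) i) =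
      PresentedGroup.of (rels := HinfRels) (i + 1)) :
    ∀ (k : ℤ) (i : ℤ), (φ ^ k) (PresentedGroup.of (rels := HinfRels) i) =
      PresentedGroup.of (rels := HinfRels) (i + k) := by
  have hinv : ∀ i : ℤ, φ⁻¹ (PresentedGroup.of (rels := HinfRels) i) =
      PresentedGroup.of (rels := HinfRels) (i - 1) := by
    intro i
    have h := hφ (i - 1)
    have h2 : φ⁻¹ (φ (PresentedGroup.of (rels := HinfRels) (i-1))) =
        PresentedGroup.of (rels := HinfRels) (i-1) := by
      simp
    rw [h] at h2
    rw [show i - 1 + 1 = i by ring] at h2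
    exact h2
  intro k
  induction k using Int.induction_on with
  | zero => intro i; simp
  | succ n ih =>
    intro i
    rw [show ((n:ℤ) + 1) = (n:ℤ) + 1 from rfl, zpow_add_one]
    rw [MulAut.mul_apply, hφ i, ih (i+1)]
    congr 1
    ring
  | pred n ih =>
    intro i
    rw [zpow_sub_one]
    rw [MulAut.mul_apply, hinv i, ih (i-1)]
    congr 1
    ring

theorem stmt14 (φ : MulAut Hinf)
    (hφ : ∀ i : ℤ, φ (PresentedGroup.of (rels := HinfRels) i) =
      PresentedGroup.of (rels := HinfRels) (i + 1)) :
    ∀ k : ℤ, k ≠ 0 → ¬ ∃ ω : Hinf, ∀ h : Hinf, (φ ^ k) h = ω⁻¹ * h * ω := by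
  rintro k hk ⟨ω, hω⟩
  have h0 := hω (PresentedGroup.of (rels := HinfRels) 0)
  rw [phi_zpow φ hφ k 0, zero_add] at h0
  -- h0 : of k = ω⁻¹ * of 0 * ω
  rcases lt_or_gt_of_ne hk with hneg | hpos
  · -- k < 0 : use threshold m = k, so g k = 1 but g 0 ≠ 1
    have := congrArg (rho k) h0
    rw [rho_of, map_mul, map_mul, map_inv, rho_of] at this
    rw [gfam_le (le_refl k)] at this
    have h1 : gfam k 0 = 1 := by
      have h := this.symm
      rw [mul_assoc, inv_mul_eq_one] at h
      exact mul_eq_right.mp h.symm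
    exact gfam_gt hneg h1
  · -- k > 0 : use threshold m = 0, so g 0 = 1 but g k ≠ 1
    have := congrArg (rho 0) h0
    rw [rho_of, map_mul, map_mul, map_inv, rho_of] at this
    rw [gfam_le (le_refl 0), mul_one, inv_mul_cancel] at this
    exact gfam_gt hpos this

end
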